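/- Let K be a number field equipped with a ring homomorphism K → ℂ, and let A be a commutative K-algebra. Let ℂ ⊗_K A be the base change of A to ℂ, a ℂ-algebra, with the canonical ring homomorphism A → ℂ ⊗_K A, a ↦ 1 ⊗ a. Then the natural map on Kähler differentials Ω_{A/ℚ} → Ω_{(ℂ ⊗_K A)/ℂ}, induced by a ↦ 1 ⊗ a over the inclusion ℚ → ℂ, is injective. (This is the infinitesimal form, at the level of modules of differentials, of Beilinson's conjectured injectivity of the rational Chow groups of a smooth projective variety over a number field into the Deligne cohomology of its complexification.) -/

import Mathlib

open scoped TensorProduct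

attribute [local instance] Algebra.TensorProduct.rightAlgebra

noncomputable section

variable (K : Type*) [Field K] [NumberField K] [Algebra K ℂ] [IsScalarTower ℚ K ℂ]
variable (A : Type*) [CommRing A] [Algebra K A] [Algebra ℚ A] [IsScalarTower ℚ K A]

instance : IsScalarTower ℚ A (ℂ ⊗[K] A) :=
  IsScalarTower.of_algebraMap_eq' (Subsingleton.elim _ _)

instance : SMulCommClass ℂ A (ℂ ⊗[K] A) :=
  ⟨fun c a x => by simp only [Algebra.smul_def, mul_left_comm]⟩

-- Step A: any ℚ-derivation of A kills the image of K.
lemma aux_derivation_algebraMap_eq_zero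
    (M : Type*) [AddCommGroup M] [Module A M] [Module ℚ M] [IsScalarTower ℚ A M]
    (D : Derivation ℚ A M) (k : K) : D (algebraMap K A k) = 0 := by
  have hint : IsIntegral ℚ k := Algebra.IsIntegral.isIntegral k
  have hsep : (minpoly ℚ k).Separable := Algebra.IsSeparable.isSeparable ℚ k
  have hne : Polynomial.aeval k (Polynomial.derivative (minpoly ℚ k)) ≠ 0 :=
    hsep.aeval_derivative_ne_zero (minpoly.aeval ℚ k)
  set x : A := algebraMap K A k
  have h0 : Polynomial.aeval x (minpoly ℚ k) = 0 := by
    have := Polynomial.aeval_algebraMap_apply A k (minpoly ℚ k)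
    rw [minpoly.aeval, map_zero] at this
    exact this
  have h1 : (0 : M) = Polynomial.aeval x (Polynomial.derivative (minpoly ℚ k)) • D x := by
    rw [← Derivation.map_aeval, h0, map_zero]
  have h2 : Polynomial.aeval x (Polynomial.derivative (minpoly ℚ k))
      = algebraMap K A (Polynomial.aeval k (Polynomial.derivative (minpoly ℚ k))) :=
    Polynomial.aeval_algebraMap_apply A k _
  set c := Polynomial.aeval k (Polynomial.derivative (minpoly ℚ k)) with hc
  have : D x = (algebraMap K A c⁻¹ * algebraMap K A c) • D x := by
    rw [← map_mul, inv_mul_cancel₀ hne, map_one, one_smul]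
  rw [this, mul_smul, ← h2, ← h1, smul_zero]

-- SMulCommClass ℚ K A
lemma aux_smulCommClass : SMulCommClass ℚ K A :=
  ⟨fun q k a => by
    simp only [Algebra.smul_def]
    rw [mul_left_comm]⟩

attribute [local instance] aux_smulCommClass

-- Step B: Ω[A⁄ℚ] → Ω[A⁄K] is injective.
lemma aux_map_QK_injective : Function.Injective (KaehlerDifferential.map ℚ K A A) := by
  let D' : Derivation K A (Ω[A⁄ℚ]) :=
    { toFun := fun a => KaehlerDifferential.D ℚ A a
      map_add' := fun a b => map_add _ a b
      map_smul' := fun k a => by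
        simp only [RingHom.id_apply]
        rw [Algebra.smul_def, Derivation.leibniz,
          aux_derivation_algebraMap_eq_zero K A _ _ k, smul_zero, add_zero,
          algebraMap_smul]
      map_one_eq_zero' := by simp
      leibniz' := fun a b => by simp }
  let l : Ω[A⁄K] →ₗ[A] Ω[A⁄ℚ] := D'.liftKaehlerDifferential
  have key : ∀ x, l (KaehlerDifferential.map ℚ K A A x) = x := by
    intro x
    have hx : x ∈ Submodule.span A (Set.range (KaehlerDifferential.D ℚ A)) := by
      rw [KaehlerDifferential.span_range_derivation]; trivial
    induction hx using Submodule.span_induction with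
    | mem x h =>
      obtain ⟨a, rfl⟩ := h
      rw [KaehlerDifferential.map_D]
      have : l (KaehlerDifferential.D K A a) = D' a :=
        Derivation.congr_fun (Derivation.liftKaehlerDifferential_comp D') a
      exact this
    | zero => simp
    | add x y _ _ hx hy => simp [hx, hy]
    | smul a x _ hx => simp [hx]
  intro x y h
  rw [← key x, ← key y, h]

-- Step C: Ω[A⁄K] → Ω[(ℂ ⊗[K] A)⁄ℂ] is injective.
lemma aux_map_KC_injective :
    Function.Injective (KaehlerDifferential.map K ℂ A (ℂ ⊗[K] A)) := by
  have h1 : ∀ b : Ω[A⁄K], KaehlerDifferential.map K ℂ A (ℂ ⊗[K] A) b =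
      KaehlerDifferential.tensorKaehlerEquivBase K ℂ A (ℂ ⊗[K] A) ((1 : ℂ) ⊗ₜ[K] b) := by
    intro b
    rw [KaehlerDifferential.tensorKaehlerEquivBase_tmul, one_smul]
  have h2 : Function.Injective (fun b : Ω[A⁄K] => (1 : ℂ) ⊗ₜ[K] b) := by
    have hinj := Module.Flat.rTensor_preserves_injective_linearMap
      (M := Ω[A⁄K]) (Algebra.linearMap K ℂ) (algebraMap K ℂ).injective
    intro x y hxy
    have h3 : (Algebra.linearMap K ℂ).rTensor (Ω[A⁄K]) ((1:K) ⊗ₜ x) =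
        (Algebra.linearMap K ℂ).rTensor (Ω[A⁄K]) ((1:K) ⊗ₜ y) := by
      simpa only [LinearMap.rTensor_tmul, Algebra.linearMap_apply, map_one] using hxy
    have h4 := hinj h3
    simpa using congrArg (TensorProduct.lid K (Ω[A⁄K])) h4
  intro x y h
  apply h2
  have := h1 x; rw [this] at h
  rw [h1 y] at h
  exact (KaehlerDifferential.tensorKaehlerEquivBase K ℂ A (ℂ ⊗[K] A)).injective h

/-- Infinitesimal form of Beilinson's conjecture: for a number field `K` with an embedding
`K → ℂ` and a commutative `K`-algebra `A`, the natural map on Kähler differentials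
`Ω[A⁄ℚ] → Ω[(ℂ ⊗[K] A)⁄ℂ]` induced by `a ↦ 1 ⊗ a` over `ℚ → ℂ` is injective. -/
theorem kaehlerDifferential_map_to_baseChange_injective :
    Function.Injective (KaehlerDifferential.map ℚ ℂ A (ℂ ⊗[K] A)) := by
  have hfac : ∀ x, KaehlerDifferential.map ℚ ℂ A (ℂ ⊗[K] A) x =
      KaehlerDifferential.map K ℂ A (ℂ ⊗[K] A) (KaehlerDifferential.map ℚ K A A x) := by
    intro x
    have hx : x ∈ Submodule.span A (Set.range (KaehlerDifferential.D ℚ A)) := by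
      rw [KaehlerDifferential.span_range_derivation]; trivial
    induction hx using Submodule.span_induction with
    | mem x h =>
      obtain ⟨a, rfl⟩ := h
      rw [KaehlerDifferential.map_D, KaehlerDifferential.map_D]
      simp [KaehlerDifferential.map_D]
    | zero => simp
    | add x y _ _ hx hy => simp [hx, hy]
    | smul a x _ hx => simp [hx]
  intro x y h
  rw [hfac x, hfac y] at h
  exact aux_map_QK_injective K A (aux_map_KC_injective K A h)
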